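/- arXiv:2112.10503 — 4 statements merged into one kernel-verified Lean document; each statement's English description precedes it below -/
import Mathlib

section
/- Fix c ∈ (−2, −1) and A > 4. There exists α₀ > 0 such that for every α > α₀ there is a unique u* ∈ (−2, c) satisfying ∫₁^{R(f(u*) − A)} (3u² − 3)/(u − c) du + ∫_{−2}^{u*} (3 − 3u²)/(u − c) du = α. (The two integrals are the transit times along the right and left branches of the critical manifold in the ε = 0 kicked dynamics, so u* is the kick point of the unique α-periodic threshold-crossing trajectory of the singular (ε = 0) periodically kicked FHN cell.) -/
open Real Set intervalIntegral

lemma cubic_anti_pos {a b : ℝ} (ha : 1 < a) (hab : a < b) :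
    3 * b - b ^ 3 < 3 * a - a ^ 3 := by
  have h1 : 0 < a * a + a * b + b * b - 3 := by nlinarith [mul_pos (sub_pos.2 ha) (show (0:ℝ) < a + 1 by linarith), mul_pos (sub_pos.2 (ha.trans hab)) (show (0:ℝ) < b + 1 by linarith), mul_pos (sub_pos.2 ha) (sub_pos.2 (ha.trans hab))]
  nlinarith [mul_pos (sub_pos.2 hab) h1]

lemma cubic_anti_pos_le {a b : ℝ} (ha : 1 < a) (hab : a ≤ b) :
    3 * b - b ^ 3 ≤ 3 * a - a ^ 3 := by
  rcases eq_or_lt_of_le hab with h | h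
  · rw [h]
  · exact le_of_lt (cubic_anti_pos ha h)

lemma cubic_anti_neg {a b : ℝ} (hb : b < -1) (hab : a < b) :
    3 * b - b ^ 3 < 3 * a - a ^ 3 := by
  have h1 : 0 < a * a + a * b + b * b - 3 := by
    nlinarith [mul_pos (show (0:ℝ) < -1 - b by linarith) (show (0:ℝ) < 1 - b by linarith),
      mul_pos (show (0:ℝ) < -1 - a by linarith) (show (0:ℝ) < 1 - a by linarith),
      mul_pos (show (0:ℝ) < -a - 1 by linarith) (show (0:ℝ) < -b - 1 by linarith)]
  nlinarith [mul_pos (sub_pos.2 hab) h1]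

noncomputable def fhnF (c x : ℝ) : ℝ := 3 / 2 * x ^ 2 + 3 * c * x + (3 * c ^ 2 - 3) * Real.log (x - c)
noncomputable def fhnG (c x : ℝ) : ℝ := -(3 / 2 * x ^ 2 + 3 * c * x) - (3 * c ^ 2 - 3) * Real.log (c - x)

lemma fhnF_deriv (c : ℝ) {x : ℝ} (hx : c < x) :
    HasDerivAt (fhnF c) ((3 * x ^ 2 - 3) / (x - c)) x := by
  have hne : x - c ≠ 0 := sub_ne_zero.2 (ne_of_gt hx)
  have h1 : HasDerivAt (fun y : ℝ => 3 / 2 * y ^ 2 + 3 * c * y) (3 * x + 3 * c) x := by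
    have := ((hasDerivAt_pow 2 x).const_mul (3 / 2 : ℝ)).add
      ((hasDerivAt_id x).const_mul (3 * c))
    refine this.congr_deriv ?_
    norm_num
    ring
  have h2 : HasDerivAt (fun y : ℝ => Real.log (y - c)) (1 / (x - c)) x := by
    have := ((hasDerivAt_id x).sub_const c).log hne
    simpa using this
  have h := h1.add (h2.const_mul (3 * c ^ 2 - 3))
  refine h.congr_deriv ?_
  field_simp
  ring

lemma fhnG_deriv (c : ℝ) {x : ℝ} (hx : x < c) :
    HasDerivAt (fhnG c) ((3 - 3 * x ^ 2) / (x - c)) x := by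
  have hne : c - x ≠ 0 := sub_ne_zero.2 (ne_of_gt hx)
  have h1 : HasDerivAt (fun y : ℝ => -(3 / 2 * y ^ 2 + 3 * c * y)) (-(3 * x + 3 * c)) x := by
    have := (((hasDerivAt_pow 2 x).const_mul (3 / 2 : ℝ)).add
      ((hasDerivAt_id x).const_mul (3 * c))).neg
    refine this.congr_deriv ?_
    norm_num
    ring
  have h2 : HasDerivAt (fun y : ℝ => Real.log (c - y)) (-1 / (c - x)) x := by
    have := ((hasDerivAt_id x).neg.const_add c).log hne
    simpa [sub_eq_add_neg] using this
  have h := h1.sub (h2.const_mul (3 * c ^ 2 - 3))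
  have hne' : x - c ≠ 0 := sub_ne_zero.2 (ne_of_lt hx)
  refine h.congr_deriv ?_
  field_simp [hne']
  ring

lemma fhnF_eval {c : ℝ} (hc : c < 1) {b : ℝ} (hb : 1 ≤ b) :
    (∫ u in (1:ℝ)..b, (3 * u ^ 2 - 3) / (u - c)) = fhnF c b - fhnF c 1 := by
  apply intervalIntegral.integral_eq_sub_of_hasDerivAt
  · intro x hx
    rw [uIcc_of_le hb] at hx
    exact fhnF_deriv c (lt_of_lt_of_le hc hx.1)
  · apply ContinuousOn.intervalIntegrable
    apply ContinuousOn.div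
    · fun_prop
    · fun_prop
    · intro x hx
      rw [uIcc_of_le hb] at hx
      exact sub_ne_zero.2 (ne_of_gt (lt_of_lt_of_le hc hx.1))

lemma fhnG_eval {c : ℝ} {w : ℝ} (hw : -2 ≤ w) (hwc : w < c) :
    (∫ u in (-2:ℝ)..w, (3 - 3 * u ^ 2) / (u - c)) = fhnG c w - fhnG c (-2) := by
  apply intervalIntegral.integral_eq_sub_of_hasDerivAt
  · intro x hx
    rw [uIcc_of_le hw] at hx
    exact fhnG_deriv c (lt_of_le_of_lt hx.2 hwc)
  · apply ContinuousOn.intervalIntegrable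
    apply ContinuousOn.div
    · fun_prop
    · fun_prop
    · intro x hx
      rw [uIcc_of_le hw] at hx
      exact sub_ne_zero.2 (ne_of_lt (lt_of_le_of_lt hx.2 hwc))

lemma fhnF_mono {c : ℝ} (hc : c < 2) : StrictMonoOn (fhnF c) (Ici (2:ℝ)) := by
  apply strictMonoOn_of_deriv_pos (convex_Ici _)
  · intro x hx
    exact (fhnF_deriv c (lt_of_lt_of_le hc hx)).continuousAt.continuousWithinAt
  · intro x hx
    rw [interior_Ici] at hx
    have h2 : (2:ℝ) < x := hx
    rw [(fhnF_deriv c (by linarith)).deriv]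
    apply div_pos (by nlinarith) (by linarith)

lemma fhnG_mono {c : ℝ} (hc1 : c < -1) : StrictMonoOn (fhnG c) (Ico (-2:ℝ) c) := by
  apply strictMonoOn_of_deriv_pos (convex_Ico _ _)
  · intro x hx
    exact (fhnG_deriv c hx.2).continuousAt.continuousWithinAt
  · intro x hx
    rw [interior_Ico] at hx
    rw [(fhnG_deriv c hx.2).deriv]
    apply div_pos_of_neg_of_neg
    · nlinarith [hx.1, hx.2]
    · linarith [hx.2]

/-- For `c ∈ (-2, -1)` and `A > 4`, for all sufficiently large `α` there is a
unique `u* ∈ (-2, c)` with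
`∫₁^{R(f(u*) − A)} (3u² − 3)/(u − c) du + ∫₋₂^{u*} (3 − 3u²)/(u − c) du = α`,
where `R v` is the unique real root `u > 2` of `3u − u³ = v` for `v < -2`.  Thus `u*` is the
kick point of the unique `α`-periodic threshold-crossing trajectory of the singular (`ε = 0`)
periodically kicked FHN cell. -/
theorem fhn_singular_periodic_kick_point_unique
    (c A : ℝ) (hc : c ∈ Set.Ioo (-2 : ℝ) (-1)) (hA : 4 < A)
    (R : ℝ → ℝ)
    (hR : ∀ v : ℝ, v < -2 → 2 < R v ∧ 3 * R v - (R v) ^ 3 = v) :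
    ∃ α₀ > (0 : ℝ), ∀ α, α₀ < α →
      ∃! w : ℝ, w ∈ Set.Ioo (-2 : ℝ) c ∧
        (∫ u in (1 : ℝ)..(R (3 * w - w ^ 3 - A)), (3 * u ^ 2 - 3) / (u - c)) +
          (∫ u in (-2 : ℝ)..w, (3 - 3 * u ^ 2) / (u - c)) = α := by
  obtain ⟨hc2, hc1⟩ := hc
  have hc1' : c < 1 := by linarith
  -- the kicked value is below -2
  have hfc : ∀ w ∈ Ioo (-2:ℝ) c, 3 * w - w ^ 3 - A < -2 := by
    intro w hw
    have h1 : 0 ≤ (w - 1) ^ 2 * (w + 2) :=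
      mul_nonneg (sq_nonneg _) (by linarith [hw.1])
    nlinarith
  have hr2 : ∀ w ∈ Ioo (-2:ℝ) c, 2 < R (3 * w - w ^ 3 - A) :=
    fun w hw => (hR _ (hfc w hw)).1
  have hrr : ∀ w ∈ Ioo (-2:ℝ) c,
      3 * R (3 * w - w ^ 3 - A) - (R (3 * w - w ^ 3 - A)) ^ 3 = 3 * w - w ^ 3 - A :=
    fun w hw => (hR _ (hfc w hw)).2
  -- explicit formula for the total transit time
  have hTeq : ∀ w ∈ Ioo (-2:ℝ) c,
      (∫ u in (1 : ℝ)..(R (3 * w - w ^ 3 - A)), (3 * u ^ 2 - 3) / (u - c)) +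
          (∫ u in (-2 : ℝ)..w, (3 - 3 * u ^ 2) / (u - c))
        = fhnF c (R (3 * w - w ^ 3 - A)) - fhnF c 1 + (fhnG c w - fhnG c (-2)) := by
    intro w hw
    rw [fhnF_eval hc1' (by linarith [hr2 w hw]), fhnG_eval (le_of_lt hw.1) hw.2]
  -- strict monotonicity of the branch-jump map
  have hrmono : StrictMonoOn (fun w => R (3 * w - w ^ 3 - A)) (Ioo (-2:ℝ) c) := by
    intro w₁ h₁ w₂ h₂ h12
    dsimp only
    by_contra hcon
    push_neg at hcon
    have hf12 : 3 * w₂ - w₂ ^ 3 - A < 3 * w₁ - w₁ ^ 3 - A := by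
      have := cubic_anti_neg (show w₂ < -1 by linarith [h₂.2]) h12
      linarith
    have h3 := cubic_anti_pos_le (show (1:ℝ) < R (3 * w₂ - w₂ ^ 3 - A)
      by linarith [hr2 w₂ h₂]) hcon
    rw [hrr w₁ h₁, hrr w₂ h₂] at h3
    linarith
  -- strict monotonicity of the explicit transit time
  have hTmono : StrictMonoOn
      (fun w => fhnF c (R (3 * w - w ^ 3 - A)) - fhnF c 1 + (fhnG c w - fhnG c (-2)))
      (Ioo (-2:ℝ) c) := by
    intro w₁ h₁ w₂ h₂ h12
    have hF := fhnF_mono (by linarith : c < 2)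
      (show R (3 * w₁ - w₁ ^ 3 - A) ∈ Ici (2:ℝ) from le_of_lt (hr2 w₁ h₁))
      (show R (3 * w₂ - w₂ ^ 3 - A) ∈ Ici (2:ℝ) from le_of_lt (hr2 w₂ h₂))
      (hrmono h₁ h₂ h12)
    have hG := fhnG_mono hc1 (show w₁ ∈ Ico (-2:ℝ) c from ⟨le_of_lt h₁.1, h₁.2⟩)
      (show w₂ ∈ Ico (-2:ℝ) c from ⟨le_of_lt h₂.1, h₂.2⟩) h12
    dsimp only
    linarith
  -- continuity of the branch-jump map
  have hrcont : ∀ w₀ ∈ Ioo (-2:ℝ) c, ContinuousAt (fun w => R (3 * w - w ^ 3 - A)) w₀ := by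
    intro w₀ hw₀
    rw [Metric.continuousAt_iff]
    intro ε hε
    set r₀ := R (3 * w₀ - w₀ ^ 3 - A) with hr₀def
    have hr₀ : 2 < r₀ := hr2 w₀ hw₀
    set ε' : ℝ := min ε ((r₀ - 2) / 2) with hε'def
    have hε'pos : 0 < ε' := lt_min hε (by linarith)
    have hε'le : ε' ≤ (r₀ - 2) / 2 := min_le_right _ _
    have hε'leε : ε' ≤ ε := min_le_left _ _
    have ha2 : 2 < r₀ - ε' := by linarith
    have hga : 3 * r₀ - r₀ ^ 3 < 3 * (r₀ - ε') - (r₀ - ε') ^ 3 :=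
      cubic_anti_pos (by linarith) (by linarith)
    have hgb : 3 * (r₀ + ε') - (r₀ + ε') ^ 3 < 3 * r₀ - r₀ ^ 3 :=
      cubic_anti_pos (by linarith) (by linarith)
    set m : ℝ := min ((3 * (r₀ - ε') - (r₀ - ε') ^ 3) - (3 * r₀ - r₀ ^ 3))
        ((3 * r₀ - r₀ ^ 3) - (3 * (r₀ + ε') - (r₀ + ε') ^ 3)) with hm
    have hmpos : 0 < m := lt_min (by linarith) (by linarith)
    have hm1 : m ≤ (3 * (r₀ - ε') - (r₀ - ε') ^ 3) - (3 * r₀ - r₀ ^ 3) := by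
      rw [hm]; exact min_le_left _ _
    have hm2 : m ≤ (3 * r₀ - r₀ ^ 3) - (3 * (r₀ + ε') - (r₀ + ε') ^ 3) := by
      rw [hm]; exact min_le_right _ _
    have hfccont : ContinuousAt (fun w : ℝ => 3 * w - w ^ 3 - A) w₀ := by fun_prop
    rw [Metric.continuousAt_iff] at hfccont
    obtain ⟨δ₁, hδ₁pos, hδ₁⟩ := hfccont m hmpos
    refine ⟨min δ₁ (min (w₀ + 2) (c - w₀)),
      lt_min hδ₁pos (lt_min (by linarith [hw₀.1]) (by linarith [hw₀.2])), ?_⟩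
    intro x hx
    rw [Real.dist_eq] at hx
    have hx1 : |x - w₀| < δ₁ := lt_of_lt_of_le hx (min_le_left _ _)
    have hxa : |x - w₀| < w₀ + 2 :=
      lt_of_lt_of_le hx (le_trans (min_le_right _ _) (min_le_left _ _))
    have hxb : |x - w₀| < c - w₀ :=
      lt_of_lt_of_le hx (le_trans (min_le_right _ _) (min_le_right _ _))
    rw [abs_lt] at hxa hxb
    have hx2 : x ∈ Ioo (-2:ℝ) c := ⟨by linarith [hxa.1], by linarith [hxb.2]⟩
    have hfx := hδ₁ (show dist x w₀ < δ₁ by rw [Real.dist_eq]; exact hx1)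
    rw [Real.dist_eq, abs_lt] at hfx
    have h5 : 3 * w₀ - w₀ ^ 3 - A = 3 * r₀ - r₀ ^ 3 := by
      rw [hr₀def]; exact (hrr w₀ hw₀).symm
    have hfxu : 3 * x - x ^ 3 - A < 3 * (r₀ - ε') - (r₀ - ε') ^ 3 := by
      have := hfx.2; linarith
    have hfxl : 3 * (r₀ + ε') - (r₀ + ε') ^ 3 < 3 * x - x ^ 3 - A := by
      have := hfx.1; linarith
    have hrx2 : 2 < R (3 * x - x ^ 3 - A) := hr2 x hx2
    have hrxeq : 3 * R (3 * x - x ^ 3 - A) - (R (3 * x - x ^ 3 - A)) ^ 3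
        = 3 * x - x ^ 3 - A := hrr x hx2
    have hlow : r₀ - ε' < R (3 * x - x ^ 3 - A) := by
      by_contra hcon
      push_neg at hcon
      have h6 := cubic_anti_pos_le (show (1:ℝ) < R (3 * x - x ^ 3 - A) by linarith) hcon
      rw [hrxeq] at h6
      linarith
    have hhigh : R (3 * x - x ^ 3 - A) < r₀ + ε' := by
      by_contra hcon
      push_neg at hcon
      have h6 := cubic_anti_pos_le (show (1:ℝ) < r₀ + ε' by linarith) hcon
      rw [hrxeq] at h6
      linarith
    rw [Real.dist_eq, abs_lt]
    constructor <;> linarith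
  -- continuity of the explicit transit time
  have hTcont : ∀ w₀ ∈ Ioo (-2:ℝ) c, ContinuousAt
      (fun w => fhnF c (R (3 * w - w ^ 3 - A)) - fhnF c 1 + (fhnG c w - fhnG c (-2))) w₀ := by
    intro w₀ hw₀
    have h1 : ContinuousAt (fhnF c) (R (3 * w₀ - w₀ ^ 3 - A)) :=
      (fhnF_deriv c (show c < R (3 * w₀ - w₀ ^ 3 - A) by linarith [hr2 w₀ hw₀])).continuousAt
    have h3 : ContinuousAt (fhnG c) w₀ := (fhnG_deriv c hw₀.2).continuousAt
    have h2 : ContinuousAt ((fhnF c) ∘ (fun w => R (3 * w - w ^ 3 - A))) w₀ :=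
      ContinuousAt.comp h1 (hrcont w₀ hw₀)
    exact ((h2.sub continuousAt_const).add (h3.sub continuousAt_const))
  -- base point
  have hw₀mem : (-2 + c) / 2 ∈ Ioo (-2:ℝ) c := ⟨by linarith, by linarith⟩
  -- positivity of the transit time at the base point
  refine ⟨(∫ u in (1 : ℝ)..(R (3 * ((-2 + c) / 2) - ((-2 + c) / 2) ^ 3 - A)),
      (3 * u ^ 2 - 3) / (u - c)) +
      (∫ u in (-2 : ℝ)..((-2 + c) / 2), (3 - 3 * u ^ 2) / (u - c)), ?_, ?_⟩
  · have h1 : 0 ≤ ∫ u in (1 : ℝ)..(R (3 * ((-2 + c) / 2) - ((-2 + c) / 2) ^ 3 - A)),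
        (3 * u ^ 2 - 3) / (u - c) := by
      apply intervalIntegral.integral_nonneg (by linarith [hr2 _ hw₀mem])
      intro u hu
      apply div_nonneg (by nlinarith [hu.1]) (by linarith [hu.1])
    have h2 : 0 < ∫ u in (-2 : ℝ)..((-2 + c) / 2), (3 - 3 * u ^ 2) / (u - c) := by
      apply intervalIntegral.intervalIntegral_pos_of_pos_on
      · apply ContinuousOn.intervalIntegrable
        apply ContinuousOn.div
        · fun_prop
        · fun_prop
        · intro x hx
          rw [uIcc_of_le (by linarith : (-2:ℝ) ≤ (-2 + c) / 2)] at hx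
          exact sub_ne_zero.2 (ne_of_lt (by linarith [hx.2]))
      · intro x hx
        apply div_pos_of_neg_of_neg
        · nlinarith [hx.1, hx.2]
        · linarith [hx.2]
      · linarith
    linarith
  · intro α hα
    -- the point w₁ where the transit time exceeds α
    set K : ℝ := 3 * c ^ 2 - 3 with hK
    have hKpos : 0 < K := by nlinarith
    have hα0 : 0 < α := by
      have h1 : 0 ≤ ∫ u in (1 : ℝ)..(R (3 * ((-2 + c) / 2) - ((-2 + c) / 2) ^ 3 - A)),
          (3 * u ^ 2 - 3) / (u - c) := by
        apply intervalIntegral.integral_nonneg (by linarith [hr2 _ hw₀mem])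
        intro u hu
        apply div_nonneg (by nlinarith [hu.1]) (by linarith [hu.1])
      have h2 : 0 < ∫ u in (-2 : ℝ)..((-2 + c) / 2), (3 - 3 * u ^ 2) / (u - c) := by
        apply intervalIntegral.intervalIntegral_pos_of_pos_on
        · apply ContinuousOn.intervalIntegrable
          apply ContinuousOn.div
          · fun_prop
          · fun_prop
          · intro x hx
            rw [uIcc_of_le (by linarith : (-2:ℝ) ≤ (-2 + c) / 2)] at hx
            exact sub_ne_zero.2 (ne_of_lt (by linarith [hx.2]))
        · intro x hx
          apply div_pos_of_neg_of_neg
          · nlinarith [hx.1, hx.2]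
          · linarith [hx.2]
        · linarith
      linarith
    set w₁ : ℝ := c - (c + 2) * Real.exp (-(α + 24) / K) with hw₁def
    have hexp1 : Real.exp (-(α + 24) / K) < 1 := by
      rw [Real.exp_lt_one_iff]
      apply div_neg_of_neg_of_pos (by linarith) hKpos
    have hexp0 : 0 < Real.exp (-(α + 24) / K) := Real.exp_pos _
    have hw₁mem : w₁ ∈ Ioo (-2:ℝ) c := by
      constructor
      · have := mul_lt_mul_of_pos_left hexp1 (show (0:ℝ) < c + 2 by linarith)
        rw [hw₁def]; linarith [this]
      · rw [hw₁def]
        have := mul_pos (show (0:ℝ) < c + 2 by linarith) hexp0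
        linarith
    have hlogw₁ : Real.log (c - w₁) = Real.log (c + 2) + -(α + 24) / K := by
      have h7 : c - w₁ = (c + 2) * Real.exp (-(α + 24) / K) := by rw [hw₁def]; ring
      rw [h7, Real.log_mul (by linarith) (Real.exp_ne_zero _), Real.log_exp]
    clear_value K w₁
    -- transit time at w₁ is at least α
    have hTw₁ : α ≤ fhnF c (R (3 * w₁ - w₁ ^ 3 - A)) - fhnF c 1 + (fhnG c w₁ - fhnG c (-2)) := by
      have hFnn : 0 ≤ fhnF c (R (3 * w₁ - w₁ ^ 3 - A)) - fhnF c 1 := by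
        rw [← fhnF_eval hc1' (by linarith [hr2 w₁ hw₁mem])]
        apply intervalIntegral.integral_nonneg (by linarith [hr2 w₁ hw₁mem])
        intro u hu
        apply div_nonneg (by nlinarith [hu.1]) (by linarith [hu.1])
      have hGge : α ≤ fhnG c w₁ - fhnG c (-2) := by
        simp only [fhnG]
        rw [hlogw₁, mul_add, show c - (-2:ℝ) = c + 2 from by ring]
        have h8 : (3 * c ^ 2 - 3 : ℝ) ≠ 0 := by nlinarith
        have hcancel : (3 * c ^ 2 - 3) * (-(α + 24) / K) = -(α + 24) := by
          rw [hK, mul_comm, div_mul_cancel₀ _ h8]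
        rw [hcancel]
        have hb1 : 0 < w₁ + 2 := by linarith [hw₁mem.1]
        have hb2 : w₁ < -1 := by linarith [hw₁mem.2]
        nlinarith [mul_pos hb1 (show (0:ℝ) < -w₁ by linarith),
          mul_pos (show (0:ℝ) < c + 2 by linarith) (show (0:ℝ) < -w₁ by linarith)]
      linarith
    -- the value at the base point is less than α
    have hbase : fhnF c (R (3 * ((-2 + c) / 2) - ((-2 + c) / 2) ^ 3 - A)) - fhnF c 1
        + (fhnG c ((-2 + c) / 2) - fhnG c (-2)) < α := by
      rw [← hTeq _ hw₀mem]
      exact hα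
    have hw01 : (-2 + c) / 2 ≤ w₁ := by
      by_contra hcon
      push_neg at hcon
      have := hTmono hw₁mem hw₀mem hcon
      dsimp only at this
      linarith
    -- IVT
    have hsub : Icc ((-2 + c) / 2) w₁ ⊆ Ioo (-2:ℝ) c := fun x hx =>
      ⟨lt_of_lt_of_le hw₀mem.1 hx.1, lt_of_le_of_lt hx.2 hw₁mem.2⟩
    have hcont : ContinuousOn
        (fun w => fhnF c (R (3 * w - w ^ 3 - A)) - fhnF c 1 + (fhnG c w - fhnG c (-2)))
        (Icc ((-2 + c) / 2) w₁) := fun x hx => (hTcont x (hsub hx)).continuousWithinAt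
    obtain ⟨w, hwmem, hwT⟩ := intermediate_value_Icc hw01 hcont
      (show α ∈ Icc _ _ from ⟨le_of_lt hbase, hTw₁⟩)
    have hwIoo : w ∈ Ioo (-2:ℝ) c := hsub hwmem
    refine ⟨w, ⟨hwIoo, by rw [hTeq w hwIoo]; exact hwT⟩, ?_⟩
    rintro w' ⟨hw'Ioo, hw'T⟩
    apply hTmono.injOn hw'Ioo hwIoo
    dsimp only
    rw [← hTeq w' hw'Ioo, hw'T]
    exact hwT.symm
end

section
/- Fix c ∈ (−2, −1) and A > 4. Let T_R(w) = ∫₁^{R(f(w) − A)} (3u² − 3)/(u − c) du for w ∈ (−2, c), and let L : [0, ∞) → [−2, c) be the solution of the left-branch slow flow (3 − 3L(s)²)·L'(s) = L(s) − c with L(0) = −2. Then there exists α₀ > 0 such that for every α > α₀ the return map P(w) := L(α − T_R(w)) is well defined on (−2, c), has a fixed point u* ∈ (−2, c), and is a strict (weak) contraction near u*: there exists δ > 0 such that |P(w₂) − P(w₁)| < |w₂ − w₁| for all distinct w₁, w₂ ∈ (u* − δ, u* + δ) ∩ (−2, c). In particular the α-periodic trajectory of the singular (ε = 0) periodically kicked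 FHN cell is locally stable. -/
open Set MeasureTheory

/-- Auxiliary algebraic estimate: if the cubic increments agree,
the root increment is controlled by the slow-variable increment. -/
lemma fhn_aux_root_lip (a b x y cc : ℝ) (ha : 2 < a) (hb : 2 < b)
    (hcc : cc < -1)
    (hx1 : -2 ≤ x) (hx2 : x ≤ cc) (hy1 : -2 ≤ y) (hy2 : y ≤ cc)
    (hkey : (a - b) * (3 - (a ^ 2 + a * b + b ^ 2))
      = (x - y) * (3 - (x ^ 2 + x * y + y ^ 2))) :
    |a - b| ≤ |x - y| := by
  have habs : |a - b| * |3 - (a ^ 2 + a * b + b ^ 2)|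
      = |x - y| * |3 - (x ^ 2 + x * y + y ^ 2)| := by
    rw [← abs_mul, ← abs_mul, hkey]
  have hRlow : 9 ≤ |3 - (a ^ 2 + a * b + b ^ 2)| := by
    rw [abs_of_nonpos (by nlinarith)]; nlinarith
  have hwup : |3 - (x ^ 2 + x * y + y ^ 2)| ≤ 9 := by
    rw [abs_of_nonpos (by nlinarith)]; nlinarith
  nlinarith [abs_nonneg (a - b), abs_nonneg (x - y),
    mul_le_mul_of_nonneg_left hwup (abs_nonneg (x - y)),
    mul_le_mul_of_nonneg_left hRlow (abs_nonneg (a - b))]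

set_option maxHeartbeats 1000000 in
/-- For `c ∈ (-2, -1)` and `A > 4`, with `T_R(w)` the right-branch transit time
and `L` the left-branch slow flow started at `-2`, for all sufficiently large `α` the return
map `P(w) = L(α − T_R(w))` is well defined on `(-2, c)`, has a fixed point `u* ∈ (-2, c)`,
and is a strict (weak) contraction near `u*`; in particular the `α`-periodic trajectory of
the singular (`ε = 0`) periodically kicked FHN cell is locally stable. -/
theorem fhn_singular_return_map_contraction
    (c A : ℝ) (hc : c ∈ Set.Ioo (-2 : ℝ) (-1)) (hA : 4 < A)
    (R : ℝ → ℝ)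
    (hR : ∀ v : ℝ, v < -2 → 2 < R v ∧ 3 * R v - (R v) ^ 3 = v)
    (L : ℝ → ℝ)
    (hLmem : ∀ s : ℝ, 0 ≤ s → L s ∈ Set.Ico (-2 : ℝ) c)
    (hLode : ∀ s : ℝ, 0 ≤ s →
      HasDerivWithinAt L ((L s - c) / (3 - 3 * (L s) ^ 2)) (Set.Ici 0) s)
    (hL0 : L 0 = -2) :
    ∃ α₀ > (0 : ℝ), ∀ α, α₀ < α →
      -- P(w) = L(α − T_R(w)) is well defined on (−2, c): α − T_R(w) lies in [0, ∞)
      (∀ w ∈ Set.Ioo (-2 : ℝ) c,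
        0 ≤ α - ∫ u in (1 : ℝ)..(R (3 * w - w ^ 3 - A)), (3 * u ^ 2 - 3) / (u - c)) ∧
      -- fixed point u* of P in (−2, c)
      ∃ ustar ∈ Set.Ioo (-2 : ℝ) c,
        L (α - ∫ u in (1 : ℝ)..(R (3 * ustar - ustar ^ 3 - A)), (3 * u ^ 2 - 3) / (u - c))
          = ustar ∧
        -- strict (weak) contraction near u*
        ∃ δ > (0 : ℝ),
          ∀ w₁ ∈ Set.Ioo (ustar - δ) (ustar + δ) ∩ Set.Ioo (-2 : ℝ) c,
          ∀ w₂ ∈ Set.Ioo (ustar - δ) (ustar + δ) ∩ Set.Ioo (-2 : ℝ) c,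
            w₁ ≠ w₂ →
              |L (α - ∫ u in (1 : ℝ)..(R (3 * w₂ - w₂ ^ 3 - A)), (3 * u ^ 2 - 3) / (u - c)) -
                L (α - ∫ u in (1 : ℝ)..(R (3 * w₁ - w₁ ^ 3 - A)), (3 * u ^ 2 - 3) / (u - c))|
                < |w₂ - w₁| := by
  obtain ⟨hc2, hc1⟩ := hc
  -- Constants
  set C : ℝ := 3 * (A + 2) ^ 2 with hCdef
  have hCpos : 0 < C := by positivity
  set M : ℝ := C * (A + 2) with hMdef
  have hMpos : 0 < M := by positivity
  set d : ℝ := 3 * c ^ 2 - 3 with hddef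
  have hd : 0 < d := by rw [hddef]; nlinarith
  -- Facts about the root R on the relevant range
  have hRfacts : ∀ w ∈ Icc (-2 : ℝ) c,
      2 < R (3 * w - w ^ 3 - A) ∧ R (3 * w - w ^ 3 - A) ≤ A + 2 ∧
        3 * R (3 * w - w ^ 3 - A) - (R (3 * w - w ^ 3 - A)) ^ 3 = 3 * w - w ^ 3 - A := by
    intro w hw
    have hw1 : -2 ≤ w := hw.1
    have hw2 : w ≤ c := hw.2
    have hvlt : 3 * w - w ^ 3 - A < -2 := by
      nlinarith [mul_nonneg (sq_nonneg (w - 1)) (by linarith : (0:ℝ) ≤ w + 2)]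
    obtain ⟨h2, heq⟩ := hR _ hvlt
    have hvge : -2 - A ≤ 3 * w - w ^ 3 - A := by
      nlinarith [mul_nonneg (sq_nonneg (w + 1)) (by linarith : (0:ℝ) ≤ 2 - w)]
    refine ⟨h2, ?_, heq⟩
    nlinarith [mul_nonneg (mul_nonneg (by linarith : (0:ℝ) ≤ R (3 * w - w ^ 3 - A) - 2)
      (by linarith : (0:ℝ) ≤ R (3 * w - w ^ 3 - A) + 2))
      (by linarith : (0:ℝ) ≤ R (3 * w - w ^ 3 - A))]
  -- Interval integrability of the integrand on [1, ∞)
  have hint : ∀ a b : ℝ, 1 ≤ a → 1 ≤ b →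
      IntervalIntegrable (fun u => (3 * u ^ 2 - 3) / (u - c)) volume a b := by
    intro a b ha hb
    apply ContinuousOn.intervalIntegrable
    apply ContinuousOn.div
    · fun_prop
    · fun_prop
    · intro u hu
      have h1 : min a b ≤ u := hu.1
      have h2 : (1:ℝ) ≤ u := le_trans (le_min ha hb) h1
      exact sub_ne_zero.2 (by linarith : u ≠ c).symm.symm
  -- Nonnegativity of T
  have hTnn : ∀ w ∈ Icc (-2 : ℝ) c,
      0 ≤ ∫ u in (1 : ℝ)..(R (3 * w - w ^ 3 - A)), (3 * u ^ 2 - 3) / (u - c) := by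
    intro w hw
    obtain ⟨h2, hle, heq⟩ := hRfacts w hw
    apply intervalIntegral.integral_nonneg (by linarith)
    intro u hu
    have h1 : (1:ℝ) ≤ u := hu.1
    exact div_nonneg (by nlinarith) (by linarith)
  -- Upper bound for T
  have hTleM : ∀ w ∈ Icc (-2 : ℝ) c,
      (∫ u in (1 : ℝ)..(R (3 * w - w ^ 3 - A)), (3 * u ^ 2 - 3) / (u - c)) ≤ M := by
    intro w hw
    obtain ⟨h2, hle, heq⟩ := hRfacts w hw
    have hb : ‖∫ u in (1 : ℝ)..(R (3 * w - w ^ 3 - A)), (3 * u ^ 2 - 3) / (u - c)‖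
        ≤ C * |R (3 * w - w ^ 3 - A) - 1| := by
      apply intervalIntegral.norm_integral_le_of_norm_le_const
      intro x hx
      rw [Set.uIoc_of_le (by linarith)] at hx
      obtain ⟨hx1, hx2⟩ := hx
      have hxA : x ≤ A + 2 := le_trans hx2 hle
      rw [Real.norm_eq_abs, abs_of_nonneg (div_nonneg (by nlinarith) (by linarith))]
      rw [div_le_iff₀ (by linarith)]
      rw [hCdef]; nlinarith
    rw [Real.norm_eq_abs] at hb
    have h1 := le_abs_self (∫ u in (1 : ℝ)..(R (3 * w - w ^ 3 - A)), (3 * u ^ 2 - 3) / (u - c))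
    have h3 : |R (3 * w - w ^ 3 - A) - 1| ≤ A + 2 := by
      rw [abs_of_nonneg (by linarith)]; linarith
    calc (∫ u in (1 : ℝ)..(R (3 * w - w ^ 3 - A)), (3 * u ^ 2 - 3) / (u - c))
        ≤ C * |R (3 * w - w ^ 3 - A) - 1| := le_trans h1 hb
      _ ≤ C * (A + 2) := by nlinarith [abs_nonneg (R (3 * w - w ^ 3 - A) - 1)]
      _ = M := rfl
  -- Lipschitz bound for T
  have hTlip : ∀ w₁ ∈ Icc (-2 : ℝ) c, ∀ w₂ ∈ Icc (-2 : ℝ) c,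
      |(∫ u in (1 : ℝ)..(R (3 * w₂ - w₂ ^ 3 - A)), (3 * u ^ 2 - 3) / (u - c)) -
        ∫ u in (1 : ℝ)..(R (3 * w₁ - w₁ ^ 3 - A)), (3 * u ^ 2 - 3) / (u - c)|
        ≤ C * |w₂ - w₁| := by
    intro w₁ h₁ w₂ h₂
    obtain ⟨hR21, hRle1, heq1⟩ := hRfacts w₁ h₁
    obtain ⟨hR22, hRle2, heq2⟩ := hRfacts w₂ h₂
    set R₁ := R (3 * w₁ - w₁ ^ 3 - A) with hR₁
    set R₂ := R (3 * w₂ - w₂ ^ 3 - A) with hR₂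
    have hadd := intervalIntegral.integral_add_adjacent_intervals
      (hint 1 R₁ le_rfl (by linarith)) (hint R₁ R₂ (by linarith) (by linarith))
    -- |R₂ - R₁| ≤ |w₂ - w₁|
    have hRR : |R₂ - R₁| ≤ |w₂ - w₁| := by
      apply fhn_aux_root_lip R₂ R₁ w₂ w₁ c hR22 hR21 hc1 h₂.1 h₂.2 h₁.1 h₁.2
      have e2 : (3 * w₂ - w₂ ^ 3 - A) - (3 * w₁ - w₁ ^ 3 - A)
          = (R₂ - R₁) * (3 - (R₂ ^ 2 + R₂ * R₁ + R₁ ^ 2)) := by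
        rw [← heq1, ← heq2]; ring
      rw [← e2]; ring
    -- |∫_{R₁}^{R₂}| ≤ C|R₂ - R₁|
    have hb : ‖∫ u in R₁..R₂, (3 * u ^ 2 - 3) / (u - c)‖ ≤ C * |R₂ - R₁| := by
      apply intervalIntegral.norm_integral_le_of_norm_le_const
      intro x hx
      rw [Set.mem_uIoc] at hx
      have hxlow : (2:ℝ) < x := by rcases hx with h | h <;> linarith [h.1]
      have hxA : x ≤ A + 2 := by rcases hx with h | h <;> linarith [h.2]
      rw [Real.norm_eq_abs, abs_of_nonneg (div_nonneg (by nlinarith) (by linarith))]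
      rw [div_le_iff₀ (by linarith)]
      rw [hCdef]; nlinarith
    rw [Real.norm_eq_abs] at hb
    have heqsub : (∫ u in (1:ℝ)..R₂, (3 * u ^ 2 - 3) / (u - c)) -
        (∫ u in (1:ℝ)..R₁, (3 * u ^ 2 - 3) / (u - c))
        = ∫ u in R₁..R₂, (3 * u ^ 2 - 3) / (u - c) := by linarith [hadd]
    rw [heqsub]
    calc |∫ u in R₁..R₂, (3 * u ^ 2 - 3) / (u - c)| ≤ C * |R₂ - R₁| := hb
      _ ≤ C * |w₂ - w₁| := by nlinarith
  -- Basic facts about L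
  have hLcont : ContinuousOn L (Ici 0) := fun s hs => (hLode s hs).continuousWithinAt
  have hLderivpos : ∀ s : ℝ, 0 ≤ s → 0 < (L s - c) / (3 - 3 * (L s) ^ 2) := by
    intro s hs
    obtain ⟨hm1, hm2⟩ := hLmem s hs
    exact div_pos_of_neg_of_neg (by linarith) (by nlinarith)
  have hLsm : StrictMonoOn L (Ici 0) := by
    apply strictMonoOn_of_hasDerivWithinAt_pos (convex_Ici 0) hLcont
      (f' := fun s => (L s - c) / (3 - 3 * (L s) ^ 2))
    · intro x hx
      rw [interior_Ici] at hx ⊢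
      exact (hLode x hx.le).mono (Ioi_subset_Ici_self)
    · intro x hx
      rw [interior_Ici] at hx
      exact hLderivpos x hx.le
  -- L eventually gets arbitrarily close to c
  have hreach : ∀ ε : ℝ, 0 < ε → ∃ s₀ : ℝ, 0 ≤ s₀ ∧ c - L s₀ < ε := by
    intro ε hε
    by_contra hcon
    push_neg at hcon
    have hLle : ∀ s : ℝ, 0 ≤ s → L s ≤ c - ε := by
      intro s hs; linarith [hcon s hs]
    have hg : MonotoneOn (fun s => L s - ε / 9 * s) (Ici 0) := by
      apply monotoneOn_of_hasDerivWithinAt_nonneg (convex_Ici 0)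
        (f' := fun s => (L s - c) / (3 - 3 * (L s) ^ 2) - ε / 9)
      · exact hLcont.sub (by fun_prop)
      · intro x hx
        rw [interior_Ici] at hx ⊢
        have h1 := (hLode x hx.le).mono (Ioi_subset_Ici_self)
        have h2 : HasDerivWithinAt (fun s : ℝ => ε / 9 * s) (ε / 9) (Ioi 0) x := by
          simpa using ((hasDerivAt_id x).const_mul (ε / 9)).hasDerivWithinAt
        exact h1.sub h2
      · intro x hx
        rw [interior_Ici] at hx
        obtain ⟨hm1, hm2⟩ := hLmem x hx.le
        have hden : 0 < 3 * (L x) ^ 2 - 3 := by nlinarith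
        have hrewrite : (L x - c) / (3 - 3 * (L x) ^ 2) = (c - L x) / (3 * (L x) ^ 2 - 3) := by
          rw [show (3 - 3 * (L x) ^ 2) = -(3 * (L x) ^ 2 - 3) by ring,
            show (L x - c) = -(c - L x) by ring, neg_div_neg_eq]
        have h9 : 3 * (L x) ^ 2 - 3 ≤ 9 := by nlinarith
        have hnum : ε ≤ c - L x := by linarith [hLle x hx.le]
        have : ε / 9 ≤ (c - L x) / (3 * (L x) ^ 2 - 3) := by
          calc ε / 9 ≤ (c - L x) / 9 := by gcongr
            _ ≤ (c - L x) / (3 * (L x) ^ 2 - 3) := by gcongr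
        show (0:ℝ) ≤ _
        rw [hrewrite]; linarith
    -- contradiction by evaluating at a large time
    set s₁ : ℝ := 9 * (c + 3) / ε with hs₁
    have hs₁pos : 0 < s₁ := div_pos (by linarith) hε
    have := hg (self_mem_Ici) (mem_Ici.mpr hs₁pos.le) hs₁pos.le
    simp only [hL0] at this
    have hval : ε / 9 * s₁ = c + 3 := by
      rw [hs₁]; field_simp
    have hLs₁ : L s₁ ≤ c - ε := hLle s₁ hs₁pos.le
    rw [hval] at this
    linarith
  -- Choose s₀ with c - L s₀ small
  obtain ⟨s₀, hs₀nn, hs₀⟩ := hreach (d / (C + 1)) (by positivity)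
  set k : ℝ := (c - L s₀) / d with hkdef
  have hLs₀mem := hLmem s₀ hs₀nn
  have hk0 : 0 ≤ k := div_nonneg (by linarith [hLs₀mem.2]) hd.le
  have hkC : k * C < 1 := by
    rw [hkdef, div_mul_eq_mul_div, div_lt_one hd]
    have hx : (c - L s₀) * (C + 1) < d := by
      rw [← lt_div_iff₀ (by positivity)]; exact hs₀
    nlinarith [hLs₀mem.2]
  -- Lipschitz bound for L beyond s₀
  have hLlips : ∀ s₁ s₂ : ℝ, s₀ ≤ s₁ → s₀ ≤ s₂ → |L s₂ - L s₁| ≤ k * |s₂ - s₁| := by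
    have hmono2 : MonotoneOn (fun s => k * s - L s) (Ici s₀) := by
      apply monotoneOn_of_hasDerivWithinAt_nonneg (convex_Ici s₀)
        (f' := fun s => k - (L s - c) / (3 - 3 * (L s) ^ 2))
      · exact ContinuousOn.sub (by fun_prop)
          (hLcont.mono (Ici_subset_Ici.mpr hs₀nn))
      · intro x hx
        rw [interior_Ici] at hx ⊢
        have hx0 : (0:ℝ) ≤ x := le_trans hs₀nn hx.le
        have h1 : HasDerivWithinAt (fun s : ℝ => k * s) k (Ioi s₀) x := by
          simpa using ((hasDerivAt_id x).const_mul k).hasDerivWithinAt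
        exact h1.sub ((hLode x hx0).mono (fun y hy => le_trans hs₀nn (le_of_lt hy)))
      · intro x hx
        rw [interior_Ici] at hx
        have hx0 : (0:ℝ) ≤ x := le_trans hs₀nn hx.le
        obtain ⟨hm1, hm2⟩ := hLmem x hx0
        have hden : 0 < 3 * (L x) ^ 2 - 3 := by nlinarith
        have hdge : d ≤ 3 * (L x) ^ 2 - 3 := by rw [hddef]; nlinarith
        have hrewrite : (L x - c) / (3 - 3 * (L x) ^ 2) = (c - L x) / (3 * (L x) ^ 2 - 3) := by
          rw [show (3 - 3 * (L x) ^ 2) = -(3 * (L x) ^ 2 - 3) by ring,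
            show (L x - c) = -(c - L x) by ring, neg_div_neg_eq]
        have hLmono : L s₀ ≤ L x :=
          hLsm.monotoneOn (mem_Ici.mpr hs₀nn) (mem_Ici.mpr hx0) hx.le
        have hstep : (c - L x) / (3 * (L x) ^ 2 - 3) ≤ k := by
          rw [hkdef]
          calc (c - L x) / (3 * (L x) ^ 2 - 3) ≤ (c - L x) / d := by
                gcongr
            _ ≤ (c - L s₀) / d := by gcongr
        show (0:ℝ) ≤ _
        rw [hrewrite]; linarith
    have haux : ∀ s₁ s₂ : ℝ, s₀ ≤ s₁ → s₁ ≤ s₂ → |L s₂ - L s₁| ≤ k * |s₂ - s₁| := by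
      intro s₁ s₂ h1 h2
      have h1' : (0:ℝ) ≤ s₁ := le_trans hs₀nn h1
      have h2' : (0:ℝ) ≤ s₂ := by linarith
      have hmonoL : L s₁ ≤ L s₂ :=
        hLsm.monotoneOn (mem_Ici.mpr h1') (mem_Ici.mpr h2') h2
      have := hmono2 (mem_Ici.mpr h1) (mem_Ici.mpr (le_trans h1 h2)) h2
      simp only [] at this
      rw [abs_of_nonneg (by linarith : (0:ℝ) ≤ L s₂ - L s₁),
        abs_of_nonneg (by linarith : (0:ℝ) ≤ s₂ - s₁)]
      nlinarith
    intro s₁ s₂ h1 h2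
    rcases le_total s₁ s₂ with h | h
    · exact haux s₁ s₂ h1 h
    · rw [abs_sub_comm (L s₂), abs_sub_comm s₂]
      exact haux s₂ s₁ h2 h
  -- Main assembly
  refine ⟨M + s₀ + 1, by linarith, fun α hα => ?_⟩
  have hwell : ∀ w ∈ Icc (-2 : ℝ) c,
      s₀ + 1 ≤ α - ∫ u in (1 : ℝ)..(R (3 * w - w ^ 3 - A)), (3 * u ^ 2 - 3) / (u - c) := by
    intro w hw
    have := hTleM w hw
    linarith
  constructor
  · intro w hw
    have := hwell w (Ioo_subset_Icc_self hw)
    linarith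
  -- continuity of the return map on Icc (-2) c
  have hTcont : ContinuousOn
      (fun w => ∫ u in (1 : ℝ)..(R (3 * w - w ^ 3 - A)), (3 * u ^ 2 - 3) / (u - c))
      (Icc (-2 : ℝ) c) := by
    apply LipschitzOnWith.continuousOn (K := Real.toNNReal C)
    apply LipschitzOnWith.of_dist_le_mul
    intro x hx y hy
    rw [Real.dist_eq, Real.dist_eq, Real.coe_toNNReal C hCpos.le]
    exact hTlip y hy x hx
  set Φ : ℝ → ℝ := fun w =>
    L (α - ∫ u in (1 : ℝ)..(R (3 * w - w ^ 3 - A)), (3 * u ^ 2 - 3) / (u - c)) - w with hΦdef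
  have hΦcont : ContinuousOn Φ (Icc (-2 : ℝ) c) := by
    apply ContinuousOn.sub _ continuousOn_id
    apply hLcont.comp (continuousOn_const.sub hTcont)
    intro w hw
    have := hwell w hw
    exact mem_Ici.mpr (by simp only [Pi.sub_apply]; linarith)
  have hΦc : Φ c < 0 := by
    have harg : (0:ℝ) ≤ α - ∫ u in (1 : ℝ)..(R (3 * c - c ^ 3 - A)), (3 * u ^ 2 - 3) / (u - c) := by
      have := hwell c (right_mem_Icc.mpr (by linarith)); linarith
    have := (hLmem _ harg).2
    simp only [hΦdef]
    linarith
  have hΦm2 : 0 < Φ (-2) := by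
    have harg : (0:ℝ) < α - ∫ u in (1 : ℝ)..(R (3 * (-2) - (-2) ^ 3 - A)), (3 * u ^ 2 - 3) / (u - c) := by
      have := hwell (-2) (left_mem_Icc.mpr (by linarith)); linarith
    have hgt : L 0 < L (α - ∫ u in (1 : ℝ)..(R (3 * (-2) - (-2) ^ 3 - A)), (3 * u ^ 2 - 3) / (u - c)) :=
      hLsm (self_mem_Ici) (mem_Ici.mpr harg.le) harg
    rw [hL0] at hgt
    simp only [hΦdef]
    linarith
  have hIVT := intermediate_value_Ioo' (by linarith : (-2:ℝ) ≤ c) hΦcont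
  obtain ⟨ustar, hustar, hΦu⟩ := hIVT (Set.mem_Ioo.mpr ⟨hΦc, hΦm2⟩)
  refine ⟨ustar, hustar, ?_, 1, one_pos, ?_⟩
  · simp only [hΦdef] at hΦu
    linarith
  · intro w₁ hw₁ w₂ hw₂ hne
    have hw₁' : w₁ ∈ Icc (-2 : ℝ) c := Ioo_subset_Icc_self hw₁.2
    have hw₂' : w₂ ∈ Icc (-2 : ℝ) c := Ioo_subset_Icc_self hw₂.2
    have hs₁ : s₀ ≤ α - ∫ u in (1 : ℝ)..(R (3 * w₁ - w₁ ^ 3 - A)), (3 * u ^ 2 - 3) / (u - c) := by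
      have := hwell w₁ hw₁'; linarith
    have hs₂ : s₀ ≤ α - ∫ u in (1 : ℝ)..(R (3 * w₂ - w₂ ^ 3 - A)), (3 * u ^ 2 - 3) / (u - c) := by
      have := hwell w₂ hw₂'; linarith
    have hlip := hLlips _ _ hs₁ hs₂
    have habs : |(α - ∫ u in (1 : ℝ)..(R (3 * w₂ - w₂ ^ 3 - A)), (3 * u ^ 2 - 3) / (u - c)) -
        (α - ∫ u in (1 : ℝ)..(R (3 * w₁ - w₁ ^ 3 - A)), (3 * u ^ 2 - 3) / (u - c))|
        = |(∫ u in (1 : ℝ)..(R (3 * w₂ - w₂ ^ 3 - A)), (3 * u ^ 2 - 3) / (u - c)) -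
            ∫ u in (1 : ℝ)..(R (3 * w₁ - w₁ ^ 3 - A)), (3 * u ^ 2 - 3) / (u - c)| := by
      rw [show (α - ∫ u in (1 : ℝ)..(R (3 * w₂ - w₂ ^ 3 - A)), (3 * u ^ 2 - 3) / (u - c)) -
        (α - ∫ u in (1 : ℝ)..(R (3 * w₁ - w₁ ^ 3 - A)), (3 * u ^ 2 - 3) / (u - c))
        = -((∫ u in (1 : ℝ)..(R (3 * w₂ - w₂ ^ 3 - A)), (3 * u ^ 2 - 3) / (u - c)) -
            ∫ u in (1 : ℝ)..(R (3 * w₁ - w₁ ^ 3 - A)), (3 * u ^ 2 - 3) / (u - c)) by ring,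
        abs_neg]
    rw [habs] at hlip
    have hT := hTlip w₁ hw₁' w₂ hw₂'
    have hwpos : 0 < |w₂ - w₁| := abs_pos.mpr (sub_ne_zero.mpr (Ne.symm hne))
    calc |L (α - ∫ u in (1 : ℝ)..(R (3 * w₂ - w₂ ^ 3 - A)), (3 * u ^ 2 - 3) / (u - c)) -
          L (α - ∫ u in (1 : ℝ)..(R (3 * w₁ - w₁ ^ 3 - A)), (3 * u ^ 2 - 3) / (u - c))|
        ≤ k * |(∫ u in (1 : ℝ)..(R (3 * w₂ - w₂ ^ 3 - A)), (3 * u ^ 2 - 3) / (u - c)) -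
            ∫ u in (1 : ℝ)..(R (3 * w₁ - w₁ ^ 3 - A)), (3 * u ^ 2 - 3) / (u - c)| := hlip
      _ ≤ k * (C * |w₂ - w₁|) := by nlinarith
      _ = (k * C) * |w₂ - w₁| := by ring
      _ < 1 * |w₂ - w₁| := by nlinarith
      _ = |w₂ - w₁| := one_mul _
end

section
/- Let ε > 0 and c ∈ ℝ, and let (u₁, v₁) and (u₂, v₂) be differentiable functions ℝ → ℝ² each satisfying ε·uᵢ'(t) = 3uᵢ(t) − uᵢ(t)³ − vᵢ(t) and vᵢ'(t) = uᵢ(t) − c. Define g(t) = ε·(u₂(t) − u₁(t))² + (v₂(t) − v₁(t))² and w(t) = u₂(t) − u₁(t). Then for all t, g'(t) = 2·w(t)²·(3 − 3u₁(t)² − 3u₁(t)·w(t) − w(t)²); consequently g(α) − g(0) = 2∫₀^α w(t)²·(3 − 3u₁(t)² − 3u₁(t)·w(t) − w(t)²) dt for every α > 0. -/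
/-- for two solutions of the FHN system, the separation functional
`g(t) = ε(u₂ − u₁)² + (v₂ − v₁)²` satisfies
`g'(t) = 2 w(t)² (3 − 3u₁(t)² − 3u₁(t)w(t) − w(t)²)` with `w = u₂ − u₁`, and hence
`g(α) − g(0) = 2∫₀^α w² (3 − 3u₁² − 3u₁w − w²) dt` for every `α > 0`. -/
theorem fhn_separation_functional_derivative (ε c : ℝ) (hε : 0 < ε)
    (u₁ v₁ u₂ v₂ : ℝ → ℝ)
    (h₁ : ∀ t : ℝ, HasDerivAt u₁ ((3 * u₁ t - u₁ t ^ 3 - v₁ t) / ε) t ∧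
      HasDerivAt v₁ (u₁ t - c) t)
    (h₂ : ∀ t : ℝ, HasDerivAt u₂ ((3 * u₂ t - u₂ t ^ 3 - v₂ t) / ε) t ∧
      HasDerivAt v₂ (u₂ t - c) t) :
    (∀ t : ℝ,
      HasDerivAt (fun s => ε * (u₂ s - u₁ s) ^ 2 + (v₂ s - v₁ s) ^ 2)
        (2 * (u₂ t - u₁ t) ^ 2 *
          (3 - 3 * u₁ t ^ 2 - 3 * u₁ t * (u₂ t - u₁ t) - (u₂ t - u₁ t) ^ 2)) t) ∧
    ∀ α : ℝ, 0 < α →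
      (ε * (u₂ α - u₁ α) ^ 2 + (v₂ α - v₁ α) ^ 2) -
          (ε * (u₂ 0 - u₁ 0) ^ 2 + (v₂ 0 - v₁ 0) ^ 2) =
        2 * ∫ t in (0 : ℝ)..α,
          (u₂ t - u₁ t) ^ 2 *
            (3 - 3 * u₁ t ^ 2 - 3 * u₁ t * (u₂ t - u₁ t) - (u₂ t - u₁ t) ^ 2) := by
  have hderiv : ∀ t : ℝ,
      HasDerivAt (fun s => ε * (u₂ s - u₁ s) ^ 2 + (v₂ s - v₁ s) ^ 2)
        (2 * (u₂ t - u₁ t) ^ 2 *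
          (3 - 3 * u₁ t ^ 2 - 3 * u₁ t * (u₂ t - u₁ t) - (u₂ t - u₁ t) ^ 2)) t := by
    intro t
    obtain ⟨hu₁, hv₁⟩ := h₁ t
    obtain ⟨hu₂, hv₂⟩ := h₂ t
    have h : HasDerivAt (fun s => ε * (u₂ s - u₁ s) ^ 2 + (v₂ s - v₁ s) ^ 2) _ t := (((hu₂.sub hu₁).pow 2).const_mul ε).add ((hv₂.sub hv₁).pow 2)
    convert h using 1
    simp only [Pi.sub_apply]
    field_simp
    ring
  refine ⟨hderiv, fun α hα => ?_⟩
  have hcont : Continuous fun t =>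
      2 * (u₂ t - u₁ t) ^ 2 *
        (3 - 3 * u₁ t ^ 2 - 3 * u₁ t * (u₂ t - u₁ t) - (u₂ t - u₁ t) ^ 2) := by
    have hcu₁ : Continuous u₁ := by
      exact continuous_iff_continuousAt.2 fun t => (h₁ t).1.continuousAt
    have hcu₂ : Continuous u₂ :=
      continuous_iff_continuousAt.2 fun t => (h₂ t).1.continuousAt
    continuity
  have := intervalIntegral.integral_eq_sub_of_hasDerivAt
    (f := fun s => ε * (u₂ s - u₁ s) ^ 2 + (v₂ s - v₁ s) ^ 2)
    (fun t _ => hderiv t) (hcont.intervalIntegrable 0 α)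
  rw [← this, ← intervalIntegral.integral_const_mul]
  apply intervalIntegral.integral_congr
  intro t _
  simp only [smul_eq_mul]
  ring
end

section
/- Fix c ∈ (−2, −1) and A > 4, and define T : (−2, c) → ℝ by T(w) = ∫₁^{R(f(w) − A)} (3u² − 3)/(u − c) du + ∫_{−2}^{w} (3 − 3u²)/(u − c) du. Then T is continuous and strictly increasing on (−2, c), and T(w) → +∞ as w → c⁻. -/
open Filter Topology Set MeasureTheory intervalIntegral

private lemma fhn_hasDerivAt (x : ℝ) :
    HasDerivAt (fun u : ℝ => 3 * u - u ^ 3) (3 - 3 * x ^ 2) x := by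
  have h := ((hasDerivAt_id x).const_mul 3).sub (hasDerivAt_pow 3 x)
  exact h.congr_deriv (by norm_num)

private lemma fhn_anti_Ici : StrictAntiOn (fun u : ℝ => 3 * u - u ^ 3) (Set.Ici 1) := by
  apply strictAntiOn_of_deriv_neg (convex_Ici 1) (by fun_prop)
  intro x hx
  rw [interior_Ici] at hx
  rw [(fhn_hasDerivAt x).deriv]
  nlinarith [hx.out]

private lemma fhn_anti_Iic : StrictAntiOn (fun u : ℝ => 3 * u - u ^ 3) (Set.Iic (-1)) := by
  apply strictAntiOn_of_deriv_neg (convex_Iic (-1)) (by fun_prop)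
  intro x hx
  rw [interior_Iic] at hx
  rw [(fhn_hasDerivAt x).deriv]
  nlinarith [hx.out]

/-- for `c ∈ (-2, -1)` and `A > 4`, the total slow transit time
`T(w) = ∫₁^{R(f(w) − A)} (3u² − 3)/(u − c) du + ∫₋₂^w (3 − 3u²)/(u − c) du`
is continuous and strictly increasing on `(-2, c)`, and `T(w) → +∞` as `w → c⁻`. -/
theorem fhn_total_transit_time_monotone
    (c A : ℝ) (hc : c ∈ Set.Ioo (-2 : ℝ) (-1)) (hA : 4 < A)
    (R : ℝ → ℝ)
    (hR : ∀ v : ℝ, v < -2 → 2 < R v ∧ 3 * R v - (R v) ^ 3 = v) :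
    ContinuousOn
        (fun w =>
          (∫ u in (1 : ℝ)..(R (3 * w - w ^ 3 - A)), (3 * u ^ 2 - 3) / (u - c)) +
            ∫ u in (-2 : ℝ)..w, (3 - 3 * u ^ 2) / (u - c))
        (Set.Ioo (-2 : ℝ) c) ∧
      StrictMonoOn
        (fun w =>
          (∫ u in (1 : ℝ)..(R (3 * w - w ^ 3 - A)), (3 * u ^ 2 - 3) / (u - c)) +
            ∫ u in (-2 : ℝ)..w, (3 - 3 * u ^ 2) / (u - c))
        (Set.Ioo (-2 : ℝ) c) ∧
      Tendsto
        (fun w =>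
          (∫ u in (1 : ℝ)..(R (3 * w - w ^ 3 - A)), (3 * u ^ 2 - 3) / (u - c)) +
            ∫ u in (-2 : ℝ)..w, (3 - 3 * u ^ 2) / (u - c))
        (𝓝[<] c) atTop := by
  obtain ⟨hc2, hc1⟩ := hc
  -- continuity and integrability of the two integrands
  have hpc : ContinuousOn (fun u : ℝ => (3 * u ^ 2 - 3) / (u - c)) {x : ℝ | c < x} := by
    apply ContinuousOn.div (by fun_prop) (by fun_prop)
    intro x hx
    exact sub_ne_zero.2 (ne_of_gt hx)
  have hqc : ContinuousOn (fun u : ℝ => (3 - 3 * u ^ 2) / (u - c)) {x : ℝ | x < c} := by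
    apply ContinuousOn.div (by fun_prop) (by fun_prop)
    intro x hx
    exact sub_ne_zero.2 (ne_of_lt hx)
  have hopen_p : IsOpen {x : ℝ | c < x} := isOpen_lt continuous_const continuous_id
  have hopen_q : IsOpen {x : ℝ | x < c} := isOpen_lt continuous_id continuous_const
  have hpint : ∀ a b : ℝ, c < a → c < b →
      IntervalIntegrable (fun u : ℝ => (3 * u ^ 2 - 3) / (u - c)) volume a b := by
    intro a b ha hb
    apply (hpc.mono ?_).intervalIntegrable
    intro x hx
    rcases Set.mem_uIcc.mp hx with ⟨h1, _⟩ | ⟨h1, _⟩ <;> simp only [Set.mem_setOf_eq] <;> linarith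
  have hqint : ∀ a b : ℝ, a < c → b < c →
      IntervalIntegrable (fun u : ℝ => (3 - 3 * u ^ 2) / (u - c)) volume a b := by
    intro a b ha hb
    apply (hqc.mono ?_).intervalIntegrable
    intro x hx
    rcases Set.mem_uIcc.mp hx with ⟨_, h2⟩ | ⟨_, h2⟩ <;> simp only [Set.mem_setOf_eq] <;> linarith
  -- the kicked value is below -2
  have hwlt : ∀ w ∈ Set.Ioo (-2 : ℝ) c, 3 * w - w ^ 3 - A < -2 := by
    intro w hw
    have h1 := hw.1
    have h2 := hw.2
    nlinarith [mul_nonneg (by linarith : (0:ℝ) ≤ w + 2) (sq_nonneg (w - 1))]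
  -- R is strictly antitone on values below -2
  have hRanti : ∀ v₁ v₂ : ℝ, v₁ < v₂ → v₂ < -2 → R v₂ < R v₁ := by
    intro v₁ v₂ h12 h2
    obtain ⟨hg1, he1⟩ := hR v₁ (h12.trans h2)
    obtain ⟨hg2, he2⟩ := hR v₂ h2
    by_contra hle
    push_neg at hle
    have h := fhn_anti_Ici.antitoneOn (Set.mem_Ici.2 (by linarith)) (Set.mem_Ici.2 (by linarith))
      hle
    rw [he1, he2] at h
    linarith
  -- R inverts the cubic on (2, ∞)
  have hRval : ∀ y : ℝ, 2 < y → R (3 * y - y ^ 3) = y := by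
    intro y hy
    have hgy : 3 * y - y ^ 3 < -2 := by
      nlinarith [mul_pos (show (0:ℝ) < y - 2 by linarith) (pow_pos (show (0:ℝ) < y + 1 by linarith) 2)]
    obtain ⟨hgt, heq⟩ := hR (3 * y - y ^ 3) hgy
    exact fhn_anti_Ici.injOn (Set.mem_Ici.2 (by linarith)) (Set.mem_Ici.2 (by linarith))
      (show 3 * R (3 * y - y ^ 3) - R (3 * y - y ^ 3) ^ 3 = 3 * y - y ^ 3 from heq)
  -- continuity of R below -2
  have hRcont : ∀ v₀ : ℝ, v₀ < -2 → ContinuousAt R v₀ := by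
    intro v₀ hv₀
    have hSmono : StrictMonoOn (fun t : ℝ => R (-t)) (Set.Ioi 2) := by
      intro t₁ h₁ t₂ h₂ h12
      exact hRanti (-t₂) (-t₁) (by linarith) (by simp only [Set.mem_Ioi] at h₁; linarith)
    have hSa : R (-(-v₀)) = R v₀ := by rw [neg_neg]
    have hRv₀ : 2 < R v₀ := (hR v₀ hv₀).1
    have hScont : ContinuousAt (fun t : ℝ => R (-t)) (-v₀) := by
      apply hSmono.continuousAt_of_exists_between (Ioi_mem_nhds (by linarith))
      · intro b hb
        simp only [hSa] at hb ⊢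
        set y := max b ((2 + R v₀) / 2) with hy
        have hy2 : 2 < y := lt_of_lt_of_le (by linarith) (le_max_right _ _)
        have hyS : y < R v₀ := max_lt hb (by linarith)
        refine ⟨-(3 * y - y ^ 3), ?_, ?_⟩
        · simp only [Set.mem_Ioi]
          nlinarith [mul_pos (show (0:ℝ) < y - 2 by linarith)
            (pow_pos (show (0:ℝ) < y + 1 by linarith) 2)]
        · have hv : R (-(-(3 * y - y ^ 3))) = y := by rw [neg_neg]; exact hRval y hy2
          rw [hv]
          exact ⟨le_max_left _ _, hyS⟩
      · intro b hb
        simp only [hSa] at hb ⊢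
        set y := min b (R v₀ + 1) with hy
        have hy2 : 2 < y := lt_min (by linarith) (by linarith)
        have hyS : R v₀ < y := lt_min hb (by linarith)
        refine ⟨-(3 * y - y ^ 3), ?_, ?_⟩
        · simp only [Set.mem_Ioi]
          nlinarith [mul_pos (show (0:ℝ) < y - 2 by linarith)
            (pow_pos (show (0:ℝ) < y + 1 by linarith) 2)]
        · have hv : R (-(-(3 * y - y ^ 3))) = y := by rw [neg_neg]; exact hRval y hy2
          rw [hv]
          exact ⟨hyS, min_le_left _ _⟩
    have hcomp : ContinuousAt ((fun t : ℝ => R (-t)) ∘ fun v : ℝ => -v) v₀ :=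
      hScont.comp continuous_neg.continuousAt
    have hre : R = (fun t : ℝ => R (-t)) ∘ fun v : ℝ => -v := by
      funext v; simp [Function.comp]
    rw [hre]
    exact hcomp
  -- properties of the landing point
  have hh2 : ∀ w ∈ Set.Ioo (-2 : ℝ) c, 2 < R (3 * w - w ^ 3 - A) :=
    fun w hw => (hR _ (hwlt w hw)).1
  have hhmono : StrictMonoOn (fun w : ℝ => R (3 * w - w ^ 3 - A)) (Set.Ioo (-2 : ℝ) c) := by
    intro w₁ h₁ w₂ h₂ h12
    apply hRanti
    · have h := fhn_anti_Iic (Set.mem_Iic.2 (by linarith [h₁.2] : w₁ ≤ -1))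
        (Set.mem_Iic.2 (by linarith [h₂.2] : w₂ ≤ -1)) h12
      simp only at h
      linarith
    · exact hwlt w₁ h₁
  have hhcont : ∀ w₀ ∈ Set.Ioo (-2 : ℝ) c, ContinuousAt (fun w : ℝ => R (3 * w - w ^ 3 - A)) w₀ :=
    by
    intro w₀ hw₀
    have hpoly : ContinuousAt (fun w : ℝ => 3 * w - w ^ 3 - A) w₀ := by fun_prop
    exact ContinuousAt.comp (g := R) (f := fun w : ℝ => 3 * w - w ^ 3 - A) (x := w₀)
      (hRcont _ (hwlt w₀ hw₀)) hpoly
  -- continuity of the primitive of p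
  have hFcont : ∀ r₀ : ℝ, c < r₀ →
      ContinuousAt (fun r : ℝ => ∫ u in (1 : ℝ)..r, (3 * u ^ 2 - 3) / (u - c)) r₀ := by
    intro r₀ hr₀
    exact (intervalIntegral.integral_hasDerivAt_right (hpint 1 r₀ (by linarith) hr₀)
      (hpc.stronglyMeasurableAtFilter hopen_p r₀ hr₀)
      (hpc.continuousAt (hopen_p.mem_nhds hr₀))).continuousAt
  have hGcont : ∀ w₀ ∈ Set.Ioo (-2 : ℝ) c,
      ContinuousAt (fun w : ℝ => ∫ u in (-2 : ℝ)..w, (3 - 3 * u ^ 2) / (u - c)) w₀ := by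
    intro w₀ hw₀
    exact (intervalIntegral.integral_hasDerivAt_right (hqint (-2) w₀ hc2 hw₀.2)
      (hqc.stronglyMeasurableAtFilter hopen_q w₀ hw₀.2)
      (hqc.continuousAt (hopen_q.mem_nhds hw₀.2))).continuousAt
  -- first integral is nonnegative
  have hFnonneg : ∀ w ∈ Set.Ioo (-2 : ℝ) c,
      0 ≤ ∫ u in (1 : ℝ)..(R (3 * w - w ^ 3 - A)), (3 * u ^ 2 - 3) / (u - c) := by
    intro w hw
    apply intervalIntegral.integral_nonneg (by linarith [hh2 w hw])
    intro u hu
    exact div_nonneg (by nlinarith [hu.1]) (by linarith [hu.1])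
  refine ⟨?_, ?_, ?_⟩
  · -- continuity
    intro w hw
    apply ContinuousAt.continuousWithinAt
    have hF : ContinuousAt
        (fun w : ℝ => ∫ u in (1 : ℝ)..(R (3 * w - w ^ 3 - A)), (3 * u ^ 2 - 3) / (u - c)) w := by
      exact ContinuousAt.comp
        (g := fun r : ℝ => ∫ u in (1 : ℝ)..r, (3 * u ^ 2 - 3) / (u - c))
        (f := fun w : ℝ => R (3 * w - w ^ 3 - A)) (x := w)
        (hFcont (R (3 * w - w ^ 3 - A)) (by linarith [hh2 w hw])) (hhcont w hw)
    exact hF.add (hGcont w hw)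
  · -- strict monotonicity
    intro w₁ h₁ w₂ h₂ h12
    have hr₁ : 2 < R (3 * w₁ - w₁ ^ 3 - A) := hh2 w₁ h₁
    have hr₂ : 2 < R (3 * w₂ - w₂ ^ 3 - A) := hh2 w₂ h₂
    have hr12 : R (3 * w₁ - w₁ ^ 3 - A) < R (3 * w₂ - w₂ ^ 3 - A) := hhmono h₁ h₂ h12
    have hadd1 := intervalIntegral.integral_add_adjacent_intervals
      (hpint 1 (R (3 * w₁ - w₁ ^ 3 - A)) (by linarith) (by linarith))
      (hpint (R (3 * w₁ - w₁ ^ 3 - A)) (R (3 * w₂ - w₂ ^ 3 - A)) (by linarith) (by linarith))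
    have hp0 : 0 ≤ ∫ u in (R (3 * w₁ - w₁ ^ 3 - A))..(R (3 * w₂ - w₂ ^ 3 - A)),
        (3 * u ^ 2 - 3) / (u - c) := by
      apply intervalIntegral.integral_nonneg (le_of_lt hr12)
      intro u hu
      exact div_nonneg (by nlinarith [hu.1]) (by linarith [hu.1])
    have hadd2 := intervalIntegral.integral_add_adjacent_intervals
      (hqint (-2) w₁ hc2 h₁.2) (hqint w₁ w₂ h₁.2 h₂.2)
    have hq0 : 0 < ∫ u in w₁..w₂, (3 - 3 * u ^ 2) / (u - c) := by
      apply intervalIntegral.intervalIntegral_pos_of_pos_on (hqint w₁ w₂ h₁.2 h₂.2) ?_ h12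
      intro u hu
      have hu1 : -2 < u := lt_trans h₁.1 hu.1
      have hu2 : u < c := lt_trans hu.2 h₂.2
      apply div_pos_of_neg_of_neg
      · nlinarith [sq_nonneg (u + 1)]
      · linarith
    simp only
    linarith
  · -- divergence
    set m : ℝ := (c - 2) / 2 with hm
    have hm2 : -2 < m := by rw [hm]; linarith
    have hmc : m < c := by rw [hm]; linarith
    have hδ : 0 < 3 * c ^ 2 - 3 := by nlinarith
    -- lower bound for the second integral
    have hGlb : ∀ w ∈ Set.Ioo m c,
        (3 * c ^ 2 - 3) * (Real.log (c - m) - Real.log (c - w)) +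
          (∫ u in (-2 : ℝ)..m, (3 - 3 * u ^ 2) / (u - c)) ≤
        ∫ u in (-2 : ℝ)..w, (3 - 3 * u ^ 2) / (u - c) := by
      intro w hw
      have hadd := intervalIntegral.integral_add_adjacent_intervals
        (hqint (-2) m hc2 hmc) (hqint m w hmc hw.2)
      have hlinc : ContinuousOn (fun u : ℝ => (3 * c ^ 2 - 3) * (c - u)⁻¹) {x : ℝ | x < c} := by
        apply ContinuousOn.mul continuousOn_const
        apply ContinuousOn.inv₀ (by fun_prop)
        intro x hx
        exact sub_ne_zero.2 (ne_of_gt hx)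
      have hlint : IntervalIntegrable (fun u : ℝ => (3 * c ^ 2 - 3) * (c - u)⁻¹) volume m w := by
        apply (hlinc.mono ?_).intervalIntegrable
        intro x hx
        rcases Set.mem_uIcc.mp hx with ⟨_, h2⟩ | ⟨_, h2⟩ <;> simp only [Set.mem_setOf_eq] <;>
          [linarith [hw.2]; linarith [hmc]]
      have h2 : ∫ u in m..w, (3 * c ^ 2 - 3) * (c - u)⁻¹ ≤
          ∫ u in m..w, (3 - 3 * u ^ 2) / (u - c) := by
        apply intervalIntegral.integral_mono_on (le_of_lt hw.1) hlint (hqint m w hmc hw.2)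
        intro u hu
        have hcu : 0 < c - u := by linarith [hu.2, hw.2]
        rw [show (3 - 3 * u ^ 2) / (u - c) = (3 * u ^ 2 - 3) * (c - u)⁻¹ by
          have h1 : u - c ≠ 0 := sub_ne_zero.2 (by linarith : u ≠ c)
          field_simp
          ring]
        apply mul_le_mul_of_nonneg_right ?_ (inv_nonneg.2 hcu.le)
        nlinarith [hu.2, hw.2, mul_pos hcu (by linarith [hu.2, hw.2] : (0:ℝ) < -(c + u))]
      have h3 : (∫ u in m..w, (3 * c ^ 2 - 3) * (c - u)⁻¹) =
          (3 * c ^ 2 - 3) * (Real.log (c - m) - Real.log (c - w)) := by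
        rw [intervalIntegral.integral_const_mul]
        congr 1
        have hsub := intervalIntegral.integral_comp_sub_left (a := m) (b := w)
          (fun x : ℝ => x⁻¹) c
        rw [hsub, integral_inv ?_]
        · rw [Real.log_div (ne_of_gt (by linarith : (0:ℝ) < c - m)) (ne_of_gt (by linarith [hw.2]))]
        · intro h0
          rcases Set.mem_uIcc.mp h0 with ⟨h1', h2'⟩ | ⟨h1', h2'⟩ <;> linarith [hw.2]
      linarith
    -- limit of the lower bound
    have hloglim : Tendsto (fun w : ℝ => Real.log (c - w)) (𝓝[<] c) atBot := by
      apply Real.tendsto_log_nhdsGT_zero.comp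
      apply tendsto_nhdsWithin_of_tendsto_nhds_of_eventually_within
      · have h : Tendsto (fun w : ℝ => c - w) (𝓝 c) (𝓝 (c - c)) :=
          Filter.Tendsto.sub tendsto_const_nhds tendsto_id
        rw [sub_self] at h
        exact h.mono_left nhdsWithin_le_nhds
      · filter_upwards [self_mem_nhdsWithin] with w hw
        exact sub_pos.2 (Set.mem_Iio.mp hw)
    have hlblim : Tendsto (fun w : ℝ =>
        (3 * c ^ 2 - 3) * (Real.log (c - m) - Real.log (c - w)) +
          (∫ u in (-2 : ℝ)..m, (3 - 3 * u ^ 2) / (u - c))) (𝓝[<] c) atTop := by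
      apply tendsto_atTop_add_const_right
      apply Tendsto.const_mul_atTop hδ
      simp only [sub_eq_add_neg]
      apply tendsto_atTop_add_const_left
      exact tendsto_neg_atBot_atTop.comp hloglim
    apply tendsto_atTop_mono' _ ?_ hlblim
    filter_upwards [Ioo_mem_nhdsLT_of_mem (⟨hmc, le_refl c⟩ : c ∈ Set.Ioc m c)] with w hw
    have hw' : w ∈ Set.Ioo (-2 : ℝ) c := ⟨by linarith [hw.1], hw.2⟩
    calc (3 * c ^ 2 - 3) * (Real.log (c - m) - Real.log (c - w)) +
          (∫ u in (-2 : ℝ)..m, (3 - 3 * u ^ 2) / (u - c)) ≤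
        ∫ u in (-2 : ℝ)..w, (3 - 3 * u ^ 2) / (u - c) := hGlb w hw
      _ ≤ _ := le_add_of_nonneg_left (hFnonneg w hw')
end
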